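/- For every r ∈ ℕ and every real ν > 1 there exists g ∈ ℕ such that the following holds: if ψ is a finite connected simple graph with #E(ψ) < #V(ψ) + r (i.e., its order #E − #V is less than r) whose non-backtracking (Hashimoto) matrix has a complex eigenvalue λ with |λ| ≥ ν, then the girth of ψ is at most g (in particular ψ contains a cycle). -/

import Mathlib

/-- The non-backtracking (Hashimoto) matrix of a finite simple graph `ψ`, indexed by
darts: the `(d,d')` entry is `1` iff the head of `d` is the tail of `d'` and `d'` is
not the reverse of `d`, and `0` otherwise, regarded over `ℂ`. -/
noncomputable def hashimotoMatrix {W : Type} [Fintype W] [DecidableEq W]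
    (ψ : SimpleGraph W) [DecidableRel ψ.Adj] : Matrix ψ.Dart ψ.Dart ℂ :=
  fun d d' => if d.snd = d'.fst ∧ d' ≠ d.symm then 1 else 0

set_option linter.unusedSectionVars false

namespace TangleProof

open SimpleGraph Finset

variable {W : Type} [Fintype W] [DecidableEq W] {ψ : SimpleGraph W} [DecidableRel ψ.Adj]

instance : DecidableEq ψ.Dart := fun a b => decidable_of_iff _ (SimpleGraph.Dart.ext_iff a b).symm

/-- Non-backtracking step relation between darts. -/
def NBStep (d d' : ψ.Dart) : Prop := d.snd = d'.fst ∧ d' ≠ d.symm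

instance : ∀ d d' : ψ.Dart, Decidable (NBStep d d') := fun d d' => by
  unfold NBStep; infer_instance

lemma NBStep.symm2 {d d' : ψ.Dart} (h : NBStep d d') : NBStep d'.symm d.symm := by
  obtain ⟨h1, h2⟩ := h
  refine ⟨by simp [h1.symm], ?_⟩
  intro hc
  rw [SimpleGraph.Dart.symm_symm] at hc
  exact h2 hc.symm

lemma nbstep_irrefl (d : ψ.Dart) : ¬ NBStep d d := fun h => (SimpleGraph.Dart.snd_ne_fst d) h.1

lemma no_two_cycle {d e : ψ.Dart} (h1 : NBStep d e) (h2 : NBStep e d) : False := by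
  apply h1.2
  ext : 1
  have : e.toProd = (d.snd, d.fst) := Prod.ext h1.1.symm h2.1
  simp [this, Prod.swap]

/-- A periodic (cyclically) non-backtracking closed walk of period `L`,
represented as an `L`-periodic function `ℕ → ψ.Dart` with every step non-backtracking. -/
def IsPCW (c : ℕ → ψ.Dart) (L : ℕ) : Prop :=
  0 < L ∧ (∀ i, c (i + L) = c i) ∧ ∀ i, NBStep (c i) (c (i + 1))

lemma IsPCW.add_mul {c : ℕ → ψ.Dart} {L : ℕ} (h : IsPCW c L) (i n : ℕ) :
    c (i + n * L) = c i := by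
  induction n with
  | zero => simp
  | succ n ih => rw [Nat.succ_mul, ← Nat.add_assoc, h.2.1, ih]

lemma IsPCW.mod {c : ℕ → ψ.Dart} {L : ℕ} (h : IsPCW c L) (i : ℕ) : c (i % L) = c i := by
  conv_rhs => rw [show i = i % L + (i / L) * L by rw [Nat.mod_add_div' i L]]
  rw [h.add_mul]

lemma IsPCW.rotate {c : ℕ → ψ.Dart} {L : ℕ} (h : IsPCW c L) (s : ℕ) :
    IsPCW (fun i => c (s + i)) L := by
  refine ⟨h.1, fun i => ?_, fun i => ?_⟩
  · show c (s + (i + L)) = _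
    rw [← Nat.add_assoc, h.2.1]
  · show NBStep (c (s + i)) (c (s + (i + 1)))
    rw [← Nat.add_assoc]
    exact h.2.2 _

/-- Glue a finite chain with a wrap-around step into a periodic closed walk. -/
lemma pcw_of_chain (d : ℕ → ψ.Dart) (p : ℕ) (hp : 0 < p)
    (hstep : ∀ i, i + 1 < p → NBStep (d i) (d (i + 1)))
    (hwrap : NBStep (d (p - 1)) (d 0)) :
    IsPCW (fun i => d (i % p)) p := by
  refine ⟨hp, fun i => by simp [Nat.add_mod_right], fun i => ?_⟩
  simp only
  have hmod : (i + 1) % p = (i % p + 1 % p) % p := Nat.add_mod ..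
  have ha : i % p < p := Nat.mod_lt _ hp
  rcases Nat.lt_or_ge (i % p + 1) p with h1 | h1
  · have hp2 : 1 % p = 1 := Nat.mod_eq_of_lt (by omega)
    have : (i + 1) % p = i % p + 1 := by
      rw [hmod, hp2]; exact Nat.mod_eq_of_lt h1
    rw [this]
    exact hstep _ h1
  · have hip : i % p = p - 1 := by omega
    rcases Nat.eq_or_lt_of_le hp with hp1 | hp1
    · have : (i + 1) % p = 0 := by rw [← hp1]; simp [Nat.mod_one]
      rw [this, hip]
      exact hwrap
    · have hp2 : 1 % p = 1 := Nat.mod_eq_of_lt hp1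
      have : (i + 1) % p = 0 := by
        rw [hmod, hp2, show i % p + 1 = p by omega]
        simp
      rw [this, hip]
      exact hwrap

/-- Cutting a periodic closed walk at a repeated dart. -/
lemma IsPCW.cut {c : ℕ → ψ.Dart} {L : ℕ} (h : IsPCW c L) {s p : ℕ} (hp : 0 < p)
    (hc : c s = c (s + p)) :
    IsPCW (fun t => c (s + t % p)) p := by
  have := pcw_of_chain (fun i => c (s + i)) p hp
    (fun i _ => by simpa [← Nat.add_assoc] using h.2.2 (s + i)) ?_
  · exact this
  · show NBStep (c (s + (p - 1))) (c (s + 0))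
    have h1 : s + (p - 1) + 1 = s + p := by omega
    have := h.2.2 (s + (p - 1))
    rw [h1] at this
    rw [← hc] at this
    simpa using this

/-- Reversal of a periodic closed walk. -/
lemma IsPCW.reverse {c : ℕ → ψ.Dart} {L : ℕ} (h : IsPCW c L) :
    IsPCW (fun i => (c (L - 1 - i % L)).symm) L := by
  have := pcw_of_chain (fun i => (c (L - 1 - i)).symm) L h.1 ?_ ?_
  · exact this
  · intro i hi
    have h1 : L - 1 - i = (L - 1 - (i+1)) + 1 := by omega
    have := (h.2.2 (L - 1 - (i + 1))).symm2
    rwa [← h1] at this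
  · simp only [Nat.sub_self]
    have hL := h.1
    have h0 : c L = c 0 := by simpa using h.2.1 0
    have := (h.2.2 (L - 1)).symm2
    rw [show L - 1 + 1 = L by omega, h0] at this
    simpa using this

/-- A dart is cyclic if it lies on some closed non-backtracking walk. -/
def Cyclic (d : ψ.Dart) : Prop := ∃ (c : ℕ → ψ.Dart) (L i : ℕ), IsPCW c L ∧ c i = d

lemma IsPCW.cyclic {c : ℕ → ψ.Dart} {L : ℕ} (h : IsPCW c L) (i : ℕ) : Cyclic (c i) :=
  ⟨c, L, i, h, rfl⟩

lemma Cyclic.symm {d : ψ.Dart} (h : Cyclic d) : Cyclic d.symm := by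
  obtain ⟨c, L, i, hpcw, rfl⟩ := h
  refine ⟨fun j => (c (L - 1 - j % L)).symm, L, L - 1 - i % L, hpcw.reverse, ?_⟩
  simp only
  have hiL : i % L < L := Nat.mod_lt _ hpcw.1
  have l1 : ∀ a, a < L → (L - 1 - a) % L = L - 1 - a := fun a haa => Nat.mod_eq_of_lt (by omega)
  have l2 : ∀ a, a < L → L - 1 - (L - 1 - a) = a := fun a haa => by omega
  rw [l1 _ hiL, l2 _ hiL, hpcw.mod]

/-- Build a graph walk following a sequence of darts with matching endpoints. -/
def walkFrom (c : ℕ → ψ.Dart) (hs : ∀ i, (c i).snd = (c (i + 1)).fst) :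
    (k i : ℕ) → ψ.Walk (c i).fst (c (i + k)).fst
  | 0, _ => SimpleGraph.Walk.nil
  | (k+1), i =>
      (SimpleGraph.Walk.cons (by have := (c i).adj; rwa [hs i] at this)
        (walkFrom c hs k (i+1))).copy rfl
        (congrArg (fun t => (c t).fst) (by omega))

lemma length_walkFrom (c : ℕ → ψ.Dart) (hs : ∀ i, (c i).snd = (c (i + 1)).fst) :
    ∀ k i, (walkFrom c hs k i).length = k
  | 0, _ => rfl
  | (k+1), i => by
      simp [walkFrom, SimpleGraph.Walk.length_copy, length_walkFrom c hs k (i+1)]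

lemma support_walkFrom (c : ℕ → ψ.Dart) (hs : ∀ i, (c i).snd = (c (i + 1)).fst) :
    ∀ k i, (walkFrom c hs k i).support = (List.range (k+1)).map (fun t => (c (i + t)).fst)
  | 0, i => by simp [walkFrom, List.range_succ]
  | (k+1), i => by
      rw [walkFrom, SimpleGraph.Walk.support_copy, SimpleGraph.Walk.support_cons,
        support_walkFrom c hs k (i+1)]
      conv_rhs => rw [List.range_succ_eq_map]
      rw [List.map_cons, List.map_map]
      have htail := List.map_congr_left (l := List.range (k+1))
        (f := fun t => (c (i + 1 + t)).fst)
        (g := (fun t => (c (i + t)).fst) ∘ Nat.succ)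
        (fun a _ => by
          simp only [Function.comp_apply]
          rw [show i + 1 + a = i + (a + 1) by omega])
      rw [htail]
      simp

lemma edges_walkFrom (c : ℕ → ψ.Dart) (hs : ∀ i, (c i).snd = (c (i + 1)).fst) :
    ∀ k i, (walkFrom c hs k i).edges
      = (List.range k).map (fun t => s((c (i + t)).fst, (c (i + t + 1)).fst))
  | 0, i => by simp [walkFrom]
  | (k+1), i => by
      rw [walkFrom, SimpleGraph.Walk.edges_copy, SimpleGraph.Walk.edges_cons,
        edges_walkFrom c hs k (i+1)]
      conv_rhs => rw [List.range_succ_eq_map]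
      rw [List.map_cons, List.map_map]
      have htail := List.map_congr_left (l := List.range k)
        (f := fun t => s((c (i + 1 + t)).fst, (c (i + 1 + t + 1)).fst))
        (g := (fun t => s((c (i + t)).fst, (c (i + t + 1)).fst)) ∘ Nat.succ)
        (fun a _ => by
          simp only [Function.comp_apply]
          rw [show i + 1 + a = i + (a + 1) by omega])
      rw [htail]
      simp

lemma egirth_le_of_inj {c : ℕ → ψ.Dart} {L : ℕ} (h : IsPCW c L) (h3 : 3 ≤ L)
    (hinj : ∀ i, i < L → ∀ j, j < L → (c i).fst = (c j).fst → i = j) :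
    ψ.egirth ≤ (L : ℕ∞) := by
  have hs : ∀ i, (c i).snd = (c (i + 1)).fst := fun i => (h.2.2 i).1
  have hτL : (c L).fst = (c 0).fst := by
    have : c (0 + L) = c 0 := h.2.1 0
    rw [Nat.zero_add] at this
    rw [this]
  have hend : (c (1 + (L - 1))).fst = (c 0).fst := by
    rw [show 1 + (L - 1) = L by omega]; exact hτL
  set P : ψ.Walk (c 1).fst (c 0).fst := (walkFrom c hs (L-1) 1).copy rfl hend with hP
  have hadj : ψ.Adj (c 0).fst (c 1).fst := by
    have := (c 0).adj; rwa [hs 0] at this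
  have hPsup : P.support = (List.range L).map (fun t => (c (1 + t)).fst) := by
    rw [hP, SimpleGraph.Walk.support_copy, support_walkFrom, show L - 1 + 1 = L by omega]
  have hPedges : P.edges = (List.range (L-1)).map
      (fun t => s((c (1 + t)).fst, (c (1 + t + 1)).fst)) := by
    rw [hP, SimpleGraph.Walk.edges_copy, edges_walkFrom]
  have hPpath : P.IsPath := by
    rw [SimpleGraph.Walk.isPath_def, hPsup]
    refine List.Nodup.map_on ?_ List.nodup_range
    intro t ht t' ht' heq
    rw [List.mem_range] at ht ht'
    by_cases h1 : 1 + t = L <;> by_cases h2 : 1 + t' = L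
    · omega
    · rw [h1, hτL] at heq
      have := hinj 0 (by omega) (1 + t') (by omega) heq
      omega
    · rw [h2, hτL] at heq
      have := hinj (1 + t) (by omega) 0 (by omega) heq
      omega
    · have := hinj (1 + t) (by omega) (1 + t') (by omega) heq
      omega
  have hedge : s((c 0).fst, (c 1).fst) ∉ P.edges := by
    rw [hPedges]
    intro hmem
    rw [List.mem_map] at hmem
    obtain ⟨t, ht, heq⟩ := hmem
    rw [List.mem_range] at ht
    rw [Sym2.eq_iff] at heq
    rcases heq with ⟨ha, hb⟩ | ⟨ha, hb⟩
    · have := hinj (1 + t) (by omega) 0 (by omega) ha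
      omega
    · have ht1 : 1 + t = 1 := hinj (1 + t) (by omega) 1 (by omega) ha
      have ht0 : t = 0 := by omega
      rw [ht0] at hb
      have := hinj (1 + 0 + 1) (by omega) 0 (by omega) hb
      omega
  have hcyc : (SimpleGraph.Walk.cons hadj P).IsCycle :=
    (SimpleGraph.Walk.cons_isCycle_iff P hadj).mpr ⟨hPpath, hedge⟩
  have hlen : (SimpleGraph.Walk.cons hadj P).length = L := by
    rw [SimpleGraph.Walk.length_cons, hP, SimpleGraph.Walk.length_copy, length_walkFrom]
    omega
  have : ψ.egirth ≤ ((SimpleGraph.Walk.cons hadj P).length : ℕ∞) := by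
    rw [SimpleGraph.egirth]
    refine le_trans (iInf_le _ (c 0).fst) (le_trans (iInf_le _ (SimpleGraph.Walk.cons hadj P)) ?_)
    exact iInf_le _ hcyc
  rwa [hlen] at this

theorem egirth_le_of_PCW : ∀ (L : ℕ) (c : ℕ → ψ.Dart), IsPCW c L → ψ.egirth ≤ (L : ℕ∞) := by
  intro L
  induction L using Nat.strong_induction_on with
  | _ L IH =>
  intro c h
  have hL := h.1
  have hper := h.2.1
  have hstep := h.2.2
  have hL1 : L ≠ 1 := by
    rintro rfl
    have h01 : c (0 + 1) = c 0 := hper 0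
    have := hstep 0
    rw [h01] at this
    exact nbstep_irrefl _ this
  have hL2 : L ≠ 2 := by
    rintro rfl
    have h02 : c (0 + 2) = c 0 := hper 0
    have h1 := hstep 0
    have h2 := hstep 1
    rw [show (1:ℕ) + 1 = 0 + 2 by omega, h02] at h2
    exact no_two_cycle h1 h2
  have h3 : 3 ≤ L := by omega
  by_cases hinj : ∀ i, i < L → ∀ j, j < L → (c i).fst = (c j).fst → i = j
  · exact egirth_le_of_inj h h3 hinj
  · push_neg at hinj
    obtain ⟨i, hi, j, hj, heq, hne⟩ := hinj
    have hex : ∃ t, 0 < t ∧ t < L ∧ ∃ s, (c s).fst = (c (s + t)).fst := by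
      rcases Nat.lt_or_ge i j with hij | hij
      · exact ⟨j - i, by omega, by omega, i, by rw [show i + (j - i) = j by omega]; exact heq⟩
      · exact ⟨i - j, by omega, by omega, j, by rw [show j + (i - j) = i by omega]; exact heq.symm⟩
    classical
    obtain ⟨ht0pos, ht0L, s, hs⟩ := Nat.find_spec hex
    set t₀ := Nat.find hex with ht₀def
    have ht01 : t₀ ≠ 1 := by
      rintro ht
      rw [ht] at hs
      exact (SimpleGraph.Dart.snd_ne_fst (c s)) (((hstep s).1).trans hs.symm)
    have ht02 : t₀ ≠ 2 := by
      rintro ht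
      rw [ht] at hs
      apply (hstep s).2
      ext : 1
      refine Prod.ext ((hstep s).1).symm ?_
      show (c (s+1)).snd = (c s).fst
      rw [(hstep (s+1)).1, show s + 1 + 1 = s + 2 by omega]
      exact hs.symm
    have ht03 : 3 ≤ t₀ := by omega
    by_cases hw : c s = (c (s + t₀ - 1)).symm
    · have hP : 0 < t₀ - 2 ∧ t₀ - 2 < L ∧ ∃ s', (c s').fst = (c (s' + (t₀ - 2))).fst := by
        refine ⟨by omega, by omega, s + 1, ?_⟩
        rw [show s + 1 + (t₀ - 2) = s + t₀ - 1 by omega]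
        rw [((hstep s).1).symm, hw]
        simp
      exact absurd hP (Nat.find_min hex (by omega))
    · have hwrap : NBStep (c (s + (t₀ - 1))) (c (s + 0)) := by
        rw [show s + (t₀ - 1) = s + t₀ - 1 by omega, Nat.add_zero]
        constructor
        · have h1 := (hstep (s + t₀ - 1)).1
          rw [show s + t₀ - 1 + 1 = s + t₀ by omega] at h1
          rw [h1, ← hs]
        · exact hw
      have hsub : IsPCW (fun i => c (s + i % t₀)) t₀ :=
        pcw_of_chain (fun i => c (s + i)) t₀ (by omega)
          (fun i _ => by simpa [← Nat.add_assoc] using hstep (s + i)) hwrap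
      exact le_trans (IH t₀ ht0L _ hsub) (Nat.cast_le.mpr ht0L.le)

/-- The followers of a dart. -/
def nbF (d : ψ.Dart) : Finset ψ.Dart := Finset.univ.filter (fun e => NBStep d e)

lemma mem_nbF {d e : ψ.Dart} : e ∈ nbF d ↔ NBStep d e := by simp [nbF]

/-- A finite non-backtracking walk, as a function. -/
def IsNBWalk (c : ℕ → ψ.Dart) (k : ℕ) : Prop := ∀ i, i < k → NBStep (c i) (c (i + 1))

section Bellman

variable (A : ψ.Dart → ψ.Dart → ℝ)

/-- Total `A`-weight of a walk of length `k`. -/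
def wtA (c : ℕ → ψ.Dart) (k : ℕ) : ℝ := ∑ t ∈ Finset.range k, A (c t) (c (t + 1))

/-- Bellman iteration. -/
noncomputable def phiAux : ℕ → ψ.Dart → ℝ
  | 0 => fun _ => 0
  | (k+1) => fun d =>
      (insert (phiAux k d) ((nbF d).image (fun e => A d e + phiAux k e))).max'
        (Finset.insert_nonempty _ _)

lemma phiAux_le_succ (k : ℕ) (d : ψ.Dart) : phiAux A k d ≤ phiAux A (k+1) d :=
  Finset.le_max' _ _ (Finset.mem_insert_self _ _)

lemma phiAux_mono {k k' : ℕ} (h : k ≤ k') (d : ψ.Dart) : phiAux A k d ≤ phiAux A k' d := by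
  induction k' with
  | zero => rw [Nat.le_zero.mp h]
  | succ n ih =>
      rcases Nat.eq_or_lt_of_le h with rfl | h'
      · rfl
      · exact le_trans (ih (by omega)) (phiAux_le_succ A n d)

lemma phiAux_nonneg (k : ℕ) (d : ψ.Dart) : 0 ≤ phiAux A k d := phiAux_mono A (Nat.zero_le k) d

lemma phiAux_step {d e : ψ.Dart} (h : NBStep d e) (k : ℕ) :
    A d e + phiAux A k e ≤ phiAux A (k+1) d := by
  exact Finset.le_max' (insert (phiAux A k d) ((nbF d).image (fun e' => A d e' + phiAux A k e')))
    (A d e + phiAux A k e)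
    (Finset.mem_insert_of_mem (Finset.mem_image_of_mem _ (mem_nbF.mpr h)))

lemma phiAux_cases (k : ℕ) (d : ψ.Dart) :
    phiAux A (k+1) d = phiAux A k d ∨
      ∃ e, NBStep d e ∧ phiAux A (k+1) d = A d e + phiAux A k e := by
  have := Finset.max'_mem
    (insert (phiAux A k d) ((nbF d).image (fun e => A d e + phiAux A k e)))
    (Finset.insert_nonempty _ _)
  rw [Finset.mem_insert] at this
  rcases this with h | h
  · exact Or.inl h
  · rw [Finset.mem_image] at h
    obtain ⟨e, he, heq⟩ := h
    exact Or.inr ⟨e, mem_nbF.mp he, heq.symm⟩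

lemma wtA_le_phiAux : ∀ (k : ℕ) (c : ℕ → ψ.Dart), IsNBWalk c k → wtA A c k ≤ phiAux A k (c 0) := by
  intro k
  induction k with
  | zero => intro c _; simp [wtA, phiAux]
  | succ k ih =>
      intro c hw
      have hsplit : wtA A c (k+1) = wtA A (fun t => c (t+1)) k + A (c 0) (c 1) := by
        rw [wtA, Finset.sum_range_succ']
        rfl
      rw [hsplit]
      have h1 : wtA A (fun t => c (t+1)) k ≤ phiAux A k (c 1) :=
        ih _ (fun i hi => hw (i+1) (by omega))
      have h2 := phiAux_step A (hw 0 (by omega)) k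
      linarith
lemma exists_walk_phiAux :
    ∀ (k : ℕ) (d : ψ.Dart), ∃ (c : ℕ → ψ.Dart) (j : ℕ), j ≤ k ∧ IsNBWalk c j ∧ c 0 = d ∧
      wtA A c j = phiAux A k d := by
  intro k
  induction k with
  | zero =>
      intro d
      exact ⟨fun _ => d, 0, le_refl _, fun i hi => absurd hi (by omega), rfl, by simp [wtA, phiAux]⟩
  | succ k ih =>
      intro d
      rcases phiAux_cases A k d with h | ⟨e, he, h⟩
      · obtain ⟨c, j, hj, hwalk, hc0, hwt⟩ := ih d
        exact ⟨c, j, by omega, hwalk, hc0, by rw [hwt, ← h]⟩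
      · obtain ⟨c, j, hj, hwalk, hc0, hwt⟩ := ih e
        refine ⟨fun i => if i = 0 then d else c (i - 1), j + 1, by omega, ?_, by simp, ?_⟩
        · intro i hi
          rcases Nat.eq_zero_or_pos i with rfl | hpos
          · simpa [hc0] using he
          · have e1 : i - 1 + 1 = i := by omega
            simp only [if_neg (by omega : ¬ i = 0), if_neg (by omega : ¬ i + 1 = 0)]
            have := hwalk (i - 1) (by omega)
            rwa [e1] at this
        · rw [wtA, Finset.sum_range_succ', h]
          have hterm : ∀ t, A (if t + 1 = 0 then d else c (t + 1 - 1))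
              (if t + 1 + 1 = 0 then d else c (t + 1 + 1 - 1)) = A (c t) (c (t + 1)) := by
            intro t
            simp
          rw [Finset.sum_congr rfl (fun t _ => hterm t)]
          norm_num
          rw [hc0, ← hwt, wtA]
          ring

end Bellman

section Splice

variable (A : ψ.Dart → ψ.Dart → ℝ)
variable (Hcyc : ∀ (c : ℕ → ψ.Dart) (L : ℕ), IsPCW c L →
  ∑ t ∈ Finset.range L, A (c t) (c (t + 1)) ≤ 0)

include Hcyc in
lemma wtA_le_phi_card : ∀ (k : ℕ) (c : ℕ → ψ.Dart), IsNBWalk c k →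
    wtA A c k ≤ phiAux A (Fintype.card ψ.Dart) (c 0) := by
  intro k
  induction k using Nat.strong_induction_on with
  | _ k IH =>
  intro c hw
  rcases le_or_gt k (Fintype.card ψ.Dart) with hk | hk
  · exact le_trans (wtA_le_phiAux A k c hw) (phiAux_mono A hk _)
  · set N := Fintype.card ψ.Dart with hN
    have hmap : ∀ x ∈ Finset.range (N+1), c x ∈ (Finset.univ : Finset ψ.Dart) :=
      fun x _ => Finset.mem_univ _
    have hcard : (Finset.univ : Finset ψ.Dart).card < (Finset.range (N+1)).card := by
      simp [hN]
    obtain ⟨i0, hi0, j0, hj0, hne, hceq0⟩ :=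
      Finset.exists_ne_map_eq_of_card_lt_of_maps_to hcard hmap
    rw [Finset.mem_range] at hi0 hj0
    have hij : ∃ i j, i < j ∧ j ≤ N ∧ c i = c j := by
      rcases Nat.lt_or_ge i0 j0 with h' | h'
      · exact ⟨i0, j0, h', by omega, hceq0⟩
      · exact ⟨j0, i0, by omega, by omega, hceq0.symm⟩
    obtain ⟨i, j, hlt, hjN, hceq⟩ := hij
    set p := j - i with hp
    have hppos : 0 < p := by omega
    have hjk : j < k := by omega
    set c' : ℕ → ψ.Dart := fun t => if t ≤ i then c t else c (t + p) with hc'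
    have hc'walk : IsNBWalk c' (k - p) := by
      intro t ht
      by_cases h1 : t < i
      · simp only [hc', if_pos (by omega : t ≤ i), if_pos (by omega : t + 1 ≤ i)]
        exact hw t (by omega)
      by_cases h2 : t = i
      · subst h2
        simp only [hc', if_pos (le_refl t), if_neg (by omega : ¬ t + 1 ≤ t)]
        rw [hceq, show t + 1 + p = j + 1 by omega]
        exact hw j (by omega)
      · simp only [hc', if_neg (by omega : ¬ t ≤ i), if_neg (by omega : ¬ t + 1 ≤ i)]
        rw [show t + 1 + p = t + p + 1 by omega]
        exact hw (t + p) (by omega)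
    have hc'0 : c' 0 = c 0 := by simp [hc']
    have hcycpcw : IsPCW (fun t => c (i + t % p)) p := by
      apply pcw_of_chain (fun t => c (i + t)) p hppos
      · intro t ht
        show NBStep (c (i + t)) (c (i + (t + 1)))
        rw [show i + (t + 1) = i + t + 1 by omega]
        exact hw (i + t) (by omega)
      · show NBStep (c (i + (p - 1))) (c (i + 0))
        rw [Nat.add_zero, show i + (p - 1) = j - 1 by omega]
        have := hw (j - 1) (by omega)
        rwa [show j - 1 + 1 = j by omega, ← hceq] at this
    have hcycle_wt : ∑ t ∈ Finset.range p, A (c (i + t % p)) (c (i + (t+1) % p)) ≤ 0 :=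
      Hcyc _ p hcycpcw
    have hmid : ∑ t ∈ Finset.range p, A (c (i + t % p)) (c (i + (t+1) % p))
        = ∑ t ∈ Finset.Ico i j, A (c t) (c (t + 1)) := by
      rw [Finset.sum_Ico_eq_sum_range, show j - i = p from rfl]
      apply Finset.sum_congr rfl
      intro t ht
      rw [Finset.mem_range] at ht
      have h1 : t % p = t := Nat.mod_eq_of_lt ht
      by_cases h2 : t + 1 < p
      · have h3 : (t + 1) % p = t + 1 := Nat.mod_eq_of_lt h2
        rw [h1, h3, show i + (t + 1) = i + t + 1 by omega]
      · have h3 : (t + 1) % p = 0 := by rw [show t + 1 = p by omega]; simp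
        rw [h1, h3, Nat.add_zero, hceq, show j = i + t + 1 by omega]
    have e1 : ∑ t ∈ Finset.Ico 0 i, A (c' t) (c' (t+1)) = ∑ t ∈ Finset.Ico 0 i, A (c t) (c (t+1)) := by
      apply Finset.sum_congr rfl
      intro t ht
      rw [Finset.mem_Ico] at ht
      simp only [hc', if_pos (by omega : t ≤ i), if_pos (by omega : t + 1 ≤ i)]
    have e2 : ∑ t ∈ Finset.Ico i (k - p), A (c' t) (c' (t+1))
        = ∑ t ∈ Finset.Ico j k, A (c t) (c (t+1)) := by
      rw [Finset.sum_Ico_eq_sum_range, Finset.sum_Ico_eq_sum_range,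
        show k - p - i = k - j by omega]
      apply Finset.sum_congr rfl
      intro t ht
      rw [Finset.mem_range] at ht
      rcases Nat.eq_zero_or_pos t with rfl | hpos
      · simp only [Nat.add_zero, hc', if_pos (le_refl i), if_neg (by omega : ¬ i + 1 ≤ i)]
        rw [hceq, show i + 1 + p = j + 1 by omega]
      · simp only [hc', if_neg (by omega : ¬ i + t ≤ i), if_neg (by omega : ¬ i + t + 1 ≤ i)]
        rw [show i + t + p = j + t by omega, show i + t + 1 + p = j + t + 1 by omega]
    have hsplit : ∀ (f : ℕ → ℝ) (a b : ℕ), a ≤ b → b ≤ k →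
        ∑ t ∈ Finset.range k, f t
          = ∑ t ∈ Finset.Ico 0 a, f t + ∑ t ∈ Finset.Ico a b, f t + ∑ t ∈ Finset.Ico b k, f t := by
      intro f a b hab hbk
      rw [Finset.range_eq_Ico, ← Finset.sum_Ico_consecutive _ (Nat.zero_le a) (le_trans hab hbk),
        ← Finset.sum_Ico_consecutive _ hab hbk]
      ring
    have hwk : wtA A c k = ∑ t ∈ Finset.Ico 0 i, A (c t) (c (t+1))
        + ∑ t ∈ Finset.Ico i j, A (c t) (c (t+1)) + ∑ t ∈ Finset.Ico j k, A (c t) (c (t+1)) :=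
      hsplit _ i j (by omega) (by omega)
    have hwk' : wtA A c' (k - p) = ∑ t ∈ Finset.Ico 0 i, A (c' t) (c' (t+1))
        + ∑ t ∈ Finset.Ico i (k-p), A (c' t) (c' (t+1)) := by
      rw [wtA, Finset.range_eq_Ico, ← Finset.sum_Ico_consecutive _ (Nat.zero_le i) (by omega : i ≤ k - p)]
    have hwtle : wtA A c k ≤ wtA A c' (k - p) := by
      rw [hwk, hwk', e1, e2]
      have := hmid ▸ hcycle_wt
      linarith
    have := IH (k - p) (by omega) c' hc'walk
    rw [hc'0] at this
    exact le_trans hwtle this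

include Hcyc in
lemma bellman_potential : ∃ φ : ψ.Dart → ℝ, ∀ d e, NBStep d e → A d e + φ e ≤ φ d := by
  refine ⟨phiAux A (Fintype.card ψ.Dart), fun d e h => ?_⟩
  refine le_trans (phiAux_step A h (Fintype.card ψ.Dart)) ?_
  obtain ⟨c, j, hj, hwalk, hc0, hwt⟩ := exists_walk_phiAux A (Fintype.card ψ.Dart + 1) d
  rw [← hwt]
  have := wtA_le_phi_card A Hcyc j c hwalk
  rwa [hc0] at this

end Splice

section Counting

variable (ψ)

/-- The set of cyclic darts. -/
noncomputable def cycD : Finset ψ.Dart :=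
  @Finset.filter _ (fun d => Cyclic d) (Classical.decPred _) Finset.univ

/-- The cyclic degree of a vertex. -/
noncomputable def cdeg (v : W) : ℕ := ((cycD ψ).filter (fun d => d.fst = v)).card

variable {ψ}

lemma mem_cycD {d : ψ.Dart} : d ∈ cycD ψ ↔ Cyclic d := by
  simp [cycD]

lemma symm_mem_cycD {d : ψ.Dart} (h : d ∈ cycD ψ) : d.symm ∈ cycD ψ :=
  mem_cycD.mpr (mem_cycD.mp h).symm

lemma snd_fiber_card (v : W) :
    ((cycD ψ).filter (fun d => d.snd = v)).card = cdeg ψ v := by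
  rw [cdeg]
  apply Finset.card_bij' (fun d _ => d.symm) (fun d _ => d.symm)
  · intro a _; simp
  · intro a _; simp
  · intro a ha
    rw [Finset.mem_filter] at ha
    exact Finset.mem_filter.mpr ⟨symm_mem_cycD ha.1, by simp [ha.2]⟩
  · intro a ha
    rw [Finset.mem_filter] at ha
    exact Finset.mem_filter.mpr ⟨symm_mem_cycD ha.1, by simp [ha.2]⟩

lemma two_le_cdeg_fst {f : ψ.Dart} (hf : f ∈ cycD ψ) : 2 ≤ cdeg ψ f.fst := by
  obtain ⟨c, L, i, hpcw, hci⟩ := mem_cycD.mp hf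
  have hL := hpcw.1
  have hstep : NBStep (c (i + (L - 1))) f := by
    have h1 := hpcw.2.2 (i + (L - 1))
    rw [show i + (L - 1) + 1 = i + L by omega, hpcw.2.1 i, hci] at h1
    exact h1
  set e := c (i + (L - 1)) with he
  have hecyc : Cyclic e := hpcw.cyclic _
  have hne : f ≠ e.symm := hstep.2
  have hsub : ({f, e.symm} : Finset ψ.Dart) ⊆ (cycD ψ).filter (fun d => d.fst = f.fst) := by
    intro d hd
    rw [Finset.mem_insert, Finset.mem_singleton] at hd
    rcases hd with rfl | rfl
    · exact Finset.mem_filter.mpr ⟨hf, rfl⟩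
    · refine Finset.mem_filter.mpr ⟨mem_cycD.mpr hecyc.symm, ?_⟩
      show e.snd = f.fst
      exact hstep.1
  calc 2 = ({f, e.symm} : Finset ψ.Dart).card := (Finset.card_pair hne).symm
    _ ≤ _ := Finset.card_le_card hsub

lemma two_le_cdeg_snd {f : ψ.Dart} (hf : f ∈ cycD ψ) : 2 ≤ cdeg ψ f.snd := by
  have := two_le_cdeg_fst (symm_mem_cycD hf)
  simpa using this

lemma sum_cdeg_bound {r : ℕ} (hconn : ψ.Connected)
    (hcard : ψ.edgeFinset.card < Fintype.card W + r) (hne : (cycD ψ).Nonempty) :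
    ∑ f ∈ cycD ψ, ((cdeg ψ f.snd : ℝ) - 2) ≤ 4 * ((r : ℝ) + 1)^2 := by
  classical
  set CD := cycD ψ with hCD
  set VK : Finset W := CD.image (fun d => d.fst) with hVK
  set EK : Finset (Sym2 W) := CD.image SimpleGraph.Dart.edge with hEK
  set nV := Fintype.card W with hnV
  set mE := ψ.edgeFinset.card with hmE
  -- fiberwise over fst
  have h1 : ∑ v ∈ VK, cdeg ψ v = CD.card := by
    rw [hVK]
    exact (Finset.card_eq_sum_card_fiberwise
      (fun x hx => Finset.mem_image_of_mem _ hx)).symm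
  -- CD.card = 2 * EK.card
  have h2 : CD.card = 2 * EK.card := by
    rw [Finset.card_eq_sum_card_fiberwise
      (fun (x : ψ.Dart) (hx : x ∈ CD) => Finset.mem_image_of_mem SimpleGraph.Dart.edge hx)]
    rw [Finset.sum_congr rfl (fun e he => ?_), Finset.sum_const, smul_eq_mul, mul_comm]
    obtain ⟨f, hf, rfl⟩ := Finset.mem_image.mp he
    have : CD.filter (fun d => d.edge = f.edge) = {f, f.symm} := by
      ext d
      rw [Finset.mem_filter, Finset.mem_insert, Finset.mem_singleton]
      constructor
      · rintro ⟨hd, hde⟩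
        exact SimpleGraph.dart_edge_eq_iff d f |>.mp hde
      · rintro (rfl | rfl)
        · exact ⟨hf, rfl⟩
        · exact ⟨symm_mem_cycD hf, SimpleGraph.Dart.edge_symm f⟩
    rw [this, Finset.card_pair (SimpleGraph.Dart.symm_ne f).symm]
  -- injection of vertices outside VK into edges outside EK
  obtain ⟨f0, hf0⟩ := hne
  have hw0 : f0.fst ∈ VK := Finset.mem_image_of_mem _ hf0
  set w0 := f0.fst with hw0def
  have hz : ∀ u : W, u ∉ VK → ∃ z : W, ψ.Adj u z ∧ ψ.dist z w0 + 1 = ψ.dist u w0 := by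
    intro u hu
    have hne' : u ≠ w0 := fun h => hu (h ▸ hw0)
    have hdist : ψ.dist u w0 ≠ 0 :=
      SimpleGraph.dist_ne_zero_iff_ne_and_reachable.mpr ⟨hne', hconn.preconnected u w0⟩
    obtain ⟨pw, hplen⟩ := SimpleGraph.exists_walk_of_dist_ne_zero hdist
    cases pw with
    | nil => rw [SimpleGraph.Walk.length_nil] at hplen; omega
    | @cons _ z _ hadj q =>
        refine ⟨z, hadj, ?_⟩
        rw [SimpleGraph.Walk.length_cons] at hplen
        have hle : ψ.dist z w0 ≤ q.length := SimpleGraph.dist_le q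
        have hge : ψ.dist u w0 ≤ ψ.dist u z + ψ.dist z w0 := hconn.dist_triangle
        have h1 : ψ.dist u z ≤ 1 := by
          have := SimpleGraph.dist_le (SimpleGraph.Walk.cons hadj SimpleGraph.Walk.nil)
          simpa using this
        omega
  set zf : W → W := fun u => if h : u ∉ VK then Classical.choose (hz u h) else u with hzf
  have hzf1 : ∀ u, u ∉ VK → ψ.Adj u (zf u) ∧ ψ.dist (zf u) w0 + 1 = ψ.dist u w0 := by
    intro u hu
    rw [hzf]
    simp only [dif_pos hu]
    exact Classical.choose_spec (hz u hu)
  have hinj : (Finset.univ \ VK).card ≤ (ψ.edgeFinset \ EK).card := by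
    apply Finset.card_le_card_of_injOn (fun u => s(u, zf u))
    · intro u hu
      rw [Finset.mem_coe, Finset.mem_sdiff] at hu
      obtain ⟨hadj, _⟩ := hzf1 u hu.2
      rw [Finset.mem_coe, Finset.mem_sdiff]
      constructor
      · rw [SimpleGraph.mem_edgeFinset]
        exact hadj
      · intro hEm
        obtain ⟨fd, hfd, hfe⟩ := Finset.mem_image.mp hEm
        rcases SimpleGraph.dart_edge_eq_mk'_iff.mp hfe with hcase | hcase
        · apply hu.2
          rw [hVK, Finset.mem_image]
          exact ⟨fd, hfd, congrArg Prod.fst hcase⟩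
        · apply hu.2
          rw [hVK, Finset.mem_image]
          refine ⟨fd.symm, symm_mem_cycD hfd, ?_⟩
          show fd.snd = u
          have := congrArg Prod.snd hcase
          simpa using this
    · intro u hu u' hu' heq
      rw [Finset.coe_sdiff, Set.mem_diff] at hu hu'
      have h1 := hzf1 u (by simpa using hu.2)
      have h2 := hzf1 u' (by simpa using hu'.2)
      rw [Sym2.eq_iff] at heq
      rcases heq with ⟨h, _⟩ | ⟨ha, hb⟩
      · exact h
      · exfalso
        rw [← ha] at h2
        rw [hb] at h1
        omega
  have hEKsub : EK ⊆ ψ.edgeFinset := by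
    intro e he
    obtain ⟨fd, _, rfl⟩ := Finset.mem_image.mp he
    rw [SimpleGraph.mem_edgeFinset]
    exact SimpleGraph.Dart.edge_mem fd
  have hcards1 : (Finset.univ \ VK).card = nV - VK.card := by
    rw [Finset.card_sdiff_of_subset (Finset.subset_univ _), Finset.card_univ]
  have hcards2 : (ψ.edgeFinset \ EK).card = mE - EK.card := by
    rw [Finset.card_sdiff_of_subset hEKsub]
  have hVKle : VK.card ≤ nV := by
    rw [hnV, ← Finset.card_univ]
    exact Finset.card_le_card (Finset.subset_univ _)
  have hEKle : EK.card ≤ mE := Finset.card_le_card hEKsub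
  -- the key integer inequality
  have hkey : EK.card + nV ≤ mE + VK.card := by omega
  -- sum over VK of (cdeg - 2), real version
  have h6 : ∑ v ∈ VK, ((cdeg ψ v : ℝ) - 2) = 2 * EK.card - 2 * VK.card := by
    rw [Finset.sum_sub_distrib, Finset.sum_const, nsmul_eq_mul]
    have : ∑ v ∈ VK, (cdeg ψ v : ℝ) = (CD.card : ℝ) := by
      rw [← h1]
      push_cast
      rfl
    rw [this, h2]
    push_cast
    ring
  have h7 : ∑ v ∈ VK, ((cdeg ψ v : ℝ) - 2) ≤ 2 * ((r : ℝ) - 1) := by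
    rw [h6]
    have hc : (EK.card : ℝ) + nV ≤ mE + VK.card := by exact_mod_cast hkey
    have hm : (mE : ℝ) + 1 ≤ nV + r := by exact_mod_cast hcard
    linarith
  have hnonneg : ∀ v ∈ VK, (0:ℝ) ≤ (cdeg ψ v : ℝ) - 2 := by
    intro v hv
    obtain ⟨f, hf, rfl⟩ := Finset.mem_image.mp hv
    have := two_le_cdeg_fst hf
    have : (2:ℝ) ≤ (cdeg ψ f.fst : ℝ) := by exact_mod_cast this
    linarith
  have h8 : ∀ v ∈ VK, (cdeg ψ v : ℝ) ≤ 2 * ((r:ℝ) - 1) + 2 := by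
    intro v hv
    have := Finset.single_le_sum hnonneg hv
    linarith [h7]
  -- group the target sum by snd
  have h5 : ∑ f ∈ CD, ((cdeg ψ f.snd : ℝ) - 2)
      = ∑ v ∈ VK, (cdeg ψ v : ℝ) * ((cdeg ψ v : ℝ) - 2) := by
    have hmaps : ∀ f ∈ CD, f.snd ∈ VK := by
      intro f hf
      rw [hVK, Finset.mem_image]
      exact ⟨f.symm, symm_mem_cycD hf, rfl⟩
    rw [← Finset.sum_fiberwise_of_maps_to hmaps (fun f => ((cdeg ψ f.snd : ℝ) - 2))]
    apply Finset.sum_congr rfl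
    intro v hv
    rw [Finset.sum_congr rfl (fun f hf => by
      rw [(Finset.mem_filter.mp hf).2]), Finset.sum_const, nsmul_eq_mul, snd_fiber_card]
  rw [h5]
  have : ∑ v ∈ VK, (cdeg ψ v : ℝ) * ((cdeg ψ v : ℝ) - 2)
      ≤ ∑ v ∈ VK, (2 * ((r:ℝ) - 1) + 2) * ((cdeg ψ v : ℝ) - 2) := by
    apply Finset.sum_le_sum
    intro v hv
    exact mul_le_mul_of_nonneg_right (h8 v hv) (hnonneg v hv)
  refine le_trans this ?_
  rw [← Finset.mul_sum]
  have hr0 : (0:ℝ) ≤ 2 * ((r:ℝ) - 1) + 2 := by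
    have : (0:ℝ) ≤ (r:ℝ) := Nat.cast_nonneg r
    linarith
  have := mul_le_mul_of_nonneg_left h7 hr0
  refine le_trans this ?_
  have : (0:ℝ) ≤ (r:ℝ) := Nat.cast_nonneg r
  nlinarith

end Counting

lemma occ_mul_le {c : ℕ → ψ.Dart} {L : ℕ} (h : IsPCW c L) {g : ℕ}
    (hbig : ∀ (c' : ℕ → ψ.Dart) (L' : ℕ), IsPCW c' L' → g < L') (f : ψ.Dart) :
    ((Finset.range L).filter (fun t => c t = f)).card * g ≤ L := by
  classical
  have hgL : g < L := hbig c L h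
  set O := (Finset.range L).filter (fun t => c t = f) with hO
  have hgap : ∀ i ∈ O, ∀ j ∈ O, i < j → g < j - i ∧ g + (j - i) < L := by
    intro i hi j hj hij
    rw [hO, Finset.mem_filter, Finset.mem_range] at hi hj
    have hceq : c i = c j := hi.2.trans hj.2.symm
    constructor
    · have hcut := h.cut (show 0 < j - i by omega)
        (show c i = c (i + (j - i)) by rw [show i + (j - i) = j by omega]; exact hceq)
      exact hbig _ _ hcut
    · have hc2 : c j = c (j + (L - (j - i))) := by
        rw [show j + (L - (j - i)) = i + L by omega, h.2.1 i, hceq]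
      have hcut := h.cut (show 0 < L - (j - i) by omega) hc2
      have := hbig _ _ hcut
      omega
  have hmod : ∀ x : ℕ, x < 2 * L → x % L = if x < L then x else x - L := by
    intro x hx
    split
    · exact Nat.mod_eq_of_lt ‹_›
    · rw [Nat.mod_eq_sub_mod (by omega)]
      exact Nat.mod_eq_of_lt (by omega)
  have hcard : (O ×ˢ Finset.range g).card ≤ (Finset.range L).card := by
    apply Finset.card_le_card_of_injOn (fun p => (p.1 + p.2) % L)
    · intro p _
      rw [Finset.mem_coe, Finset.mem_range]
      exact Nat.mod_lt _ (by omega)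
    · intro p hp p' hp' heq
      rw [Finset.mem_coe, Finset.mem_product] at hp hp'
      obtain ⟨hp1, hp2⟩ := hp
      obtain ⟨hp1', hp2'⟩ := hp'
      rw [Finset.mem_range] at hp2 hp2'
      have hpL : p.1 < L := Finset.mem_range.mp (Finset.mem_filter.mp hp1).1
      have hpL' : p'.1 < L := Finset.mem_range.mp (Finset.mem_filter.mp hp1').1
      simp only at heq
      rw [hmod _ (by omega), hmod _ (by omega)] at heq
      have hfst : p.1 = p'.1 := by
        by_contra hne
        rcases Nat.lt_or_ge p.1 p'.1 with hlt | hge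
        · obtain ⟨hg1, hg2⟩ := hgap _ hp1 _ hp1' hlt
          split at heq <;> split at heq <;> omega
        · have hlt : p'.1 < p.1 := by omega
          obtain ⟨hg1, hg2⟩ := hgap _ hp1' _ hp1 hlt
          split at heq <;> split at heq <;> omega
      have hsnd : p.2 = p'.2 := by
        rw [hfst] at heq
        split at heq <;> split at heq <;> omega
      exact Prod.ext hfst hsnd
  rw [Finset.card_product, Finset.card_range, Finset.card_range] at hcard
  exact hcard

lemma eigen_bound (ρ : ℝ) (w : ψ.Dart → ℝ) (hw : ∀ d, 0 < w d)
    (hsum : ∀ d, ∑ e ∈ nbF d, w e ≤ ρ * w d)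
    {lam : ℂ} {x : ψ.Dart → ℂ} (hx : x ≠ 0)
    (heig : (hashimotoMatrix ψ).mulVec x = lam • x) :
    ‖lam‖ ≤ ρ := by
  classical
  obtain ⟨d1, hd1⟩ : ∃ d, x d ≠ 0 := by
    by_contra h
    push_neg at h
    exact hx (funext h)
  obtain ⟨d0, _, hd0max⟩ := Finset.exists_max_image Finset.univ
    (fun d => ‖x d‖ / w d) ⟨d1, Finset.mem_univ d1⟩
  set M := ‖x d0‖ / w d0 with hM
  have hMb : ∀ d, ‖x d‖ ≤ M * w d := by
    intro d
    have := hd0max d (Finset.mem_univ d)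
    rw [div_le_iff₀ (hw d)] at this
    linarith [this]
  have hMpos : 0 < M := by
    have h1 : 0 < ‖x d1‖ := norm_pos_iff.mpr hd1
    have h2 : 0 < ‖x d1‖ / w d1 := div_pos h1 (hw d1)
    exact lt_of_lt_of_le h2 (hd0max d1 (Finset.mem_univ d1))
  have hmv : (hashimotoMatrix ψ).mulVec x d0 = ∑ e ∈ nbF d0, x e := by
    simp only [Matrix.mulVec, dotProduct, hashimotoMatrix, ite_mul, one_mul, zero_mul]
    rw [nbF, Finset.sum_filter]
    apply Finset.sum_congr rfl
    intro e _
    by_cases h : d0.snd = e.fst ∧ e ≠ d0.symm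
    · rw [if_pos h, if_pos (show NBStep d0 e from h)]
    · rw [if_neg h, if_neg (show ¬ NBStep d0 e from h)]
  have heq0 : lam * x d0 = ∑ e ∈ nbF d0, x e := by
    have := congrFun heig d0
    rw [hmv] at this
    rw [this, Pi.smul_apply, smul_eq_mul]
  have habs : ‖lam‖ * ‖x d0‖ ≤ ρ * (M * w d0) := by
    calc ‖lam‖ * ‖x d0‖ = ‖lam * x d0‖ := (norm_mul _ _).symm
      _ = ‖∑ e ∈ nbF d0, x e‖ := by rw [heq0]
      _ ≤ ∑ e ∈ nbF d0, ‖x e‖ := norm_sum_le _ _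
      _ ≤ ∑ e ∈ nbF d0, M * w e := Finset.sum_le_sum (fun e _ => hMb e)
      _ = M * ∑ e ∈ nbF d0, w e := by rw [Finset.mul_sum]
      _ ≤ M * (ρ * w d0) := by
          apply mul_le_mul_of_nonneg_left (hsum d0) hMpos.le
      _ = ρ * (M * w d0) := by ring
  have hx0eq : M * w d0 = ‖x d0‖ := div_mul_cancel₀ _ (hw d0).ne'
  have hxpos : 0 < ‖x d0‖ := by
    rw [← hx0eq]
    exact mul_pos hMpos (hw d0)
  rw [hx0eq] at habs
  exact le_of_mul_le_mul_right habs hxpos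

section Weights

variable (ψ)
variable (ν δ : ℝ)

noncomputable def qfun : ψ.Dart → ℝ := fun d =>
  @ite _ (Cyclic d) (Classical.dec _) (1:ℝ) δ

noncomputable def Qfun : ψ.Dart → ℝ := fun d => ∑ e ∈ nbF d, qfun ψ δ e

noncomputable def bfun : ψ.Dart → ψ.Dart → ℝ := fun d e =>
  1/2 + Real.logb ν (qfun ψ δ e) - Real.logb ν (Qfun ψ δ d)

variable {ψ ν δ}

lemma qfun_pos (hδ : 0 < δ) (d : ψ.Dart) : 0 < qfun ψ δ d := by
  unfold qfun
  split
  · norm_num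
  · exact hδ

lemma cyclesum_nonpos (hν : 1 < ν) {r g : ℕ} (hconn : ψ.Connected)
    (hcard : ψ.edgeFinset.card < Fintype.card W + r)
    (hδ : δ = Real.log ν / (4 * (Fintype.card ψ.Dart + 1)))
    (hgν : 16 * ((r:ℝ) + 1)^2 ≤ (g:ℝ) * Real.log ν)
    (hbig : ∀ (c' : ℕ → ψ.Dart) (L' : ℕ), IsPCW c' L' → g < L') :
    ∀ (c : ℕ → ψ.Dart) (L : ℕ), IsPCW c L →
      ∑ t ∈ Finset.range L, (-(bfun ψ ν δ (c t) (c (t+1)))) ≤ 0 := by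
  intro c L hpcw
  classical
  have hlog : 0 < Real.log ν := Real.log_pos hν
  set N := Fintype.card ψ.Dart with hN
  have hδpos : 0 < δ := by rw [hδ]; positivity
  have hccyc : ∀ t, Cyclic (c t) := fun t => hpcw.cyclic t
  have hccd : ∀ t, c t ∈ cycD ψ := fun t => mem_cycD.mpr (hccyc t)
  have hq1 : ∀ t, qfun ψ δ (c t) = 1 := fun t => if_pos (hccyc t)
  have hgpos : 0 < g := by
    by_contra hgz
    have := hgν
    have hr : (0:ℝ) < 16 * ((r:ℝ)+1)^2 := by positivity
    have : (g:ℝ) = 0 := by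
      have : g = 0 := by omega
      simp [this]
    nlinarith
  -- lower bound on Q
  have hQlb : ∀ t, 1 ≤ Qfun ψ δ (c t) := by
    intro t
    have hmem : c (t+1) ∈ nbF (c t) := mem_nbF.mpr (hpcw.2.2 t)
    have h1 := Finset.single_le_sum (f := fun e => qfun ψ δ e)
      (fun e _ => (qfun_pos hδpos e).le) hmem
    exact le_trans (le_of_eq (hq1 (t+1)).symm) h1
  -- upper bound on Q
  have hQub : ∀ t, Qfun ψ δ (c t) ≤ ((cdeg ψ (c t).snd : ℝ) - 1) + N * δ := by
    intro t
    rw [Qfun, ← Finset.sum_filter_add_sum_filter_not (nbF (c t)) (fun e => Cyclic e)]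
    have hq_eq1 : ∀ e ∈ (nbF (c t)).filter (fun e => Cyclic e), qfun ψ δ e = (1:ℝ) :=
      fun e he => if_pos (Finset.mem_filter.mp he).2
    have hq_eq2 : ∀ e ∈ (nbF (c t)).filter (fun e => ¬ Cyclic e), qfun ψ δ e = δ :=
      fun e he => if_neg (Finset.mem_filter.mp he).2
    have hpart1 : ∑ e ∈ (nbF (c t)).filter (fun e => Cyclic e), qfun ψ δ e
        = (((nbF (c t)).filter (fun e => Cyclic e)).card : ℝ) := by
      rw [Finset.sum_congr rfl hq_eq1, Finset.sum_const, nsmul_eq_mul, mul_one]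
    have hpart2 : ∑ e ∈ (nbF (c t)).filter (fun e => ¬ Cyclic e), qfun ψ δ e
        = (((nbF (c t)).filter (fun e => ¬ Cyclic e)).card : ℝ) * δ := by
      rw [Finset.sum_congr rfl hq_eq2, Finset.sum_const, nsmul_eq_mul]
    rw [hpart1, hpart2]
    have hcb : ((nbF (c t)).filter (fun e => Cyclic e)).card ≤ cdeg ψ (c t).snd - 1 := by
      have hsub : (nbF (c t)).filter (fun e => Cyclic e)
          ⊆ ((cycD ψ).filter (fun d => d.fst = (c t).snd)).erase (c t).symm := by
        intro e he
        rw [Finset.mem_filter, mem_nbF] at he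
        rw [Finset.mem_erase, Finset.mem_filter]
        exact ⟨he.1.2, mem_cycD.mpr he.2, he.1.1.symm⟩
      have hmem : (c t).symm ∈ (cycD ψ).filter (fun d => d.fst = (c t).snd) := by
        rw [Finset.mem_filter]
        exact ⟨symm_mem_cycD (hccd t), rfl⟩
      calc ((nbF (c t)).filter (fun e => Cyclic e)).card
          ≤ (((cycD ψ).filter (fun d => d.fst = (c t).snd)).erase (c t).symm).card :=
            Finset.card_le_card hsub
        _ = cdeg ψ (c t).snd - 1 := by rw [Finset.card_erase_of_mem hmem, cdeg]
    have hnb : ((nbF (c t)).filter (fun e => ¬ Cyclic e)).card ≤ N :=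
      le_trans (Finset.card_le_card (Finset.filter_subset _ _)) (Finset.card_le_univ _)
    have h2le : 2 ≤ cdeg ψ (c t).snd := two_le_cdeg_snd (hccd t)
    have hcbR : (((nbF (c t)).filter (fun e => Cyclic e)).card : ℝ)
        ≤ (cdeg ψ (c t).snd : ℝ) - 1 := by
      have := hcb
      have h3 : ((cdeg ψ (c t).snd - 1 : ℕ) : ℝ) = (cdeg ψ (c t).snd : ℝ) - 1 := by
        push_cast [Nat.cast_sub (by omega : 1 ≤ cdeg ψ (c t).snd)]
        ring
      calc (((nbF (c t)).filter (fun e => Cyclic e)).card : ℝ)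
          ≤ ((cdeg ψ (c t).snd - 1 : ℕ) : ℝ) := by exact_mod_cast hcb
        _ = _ := h3
    have hnbR : (((nbF (c t)).filter (fun e => ¬ Cyclic e)).card : ℝ) ≤ (N : ℝ) := by
      exact_mod_cast hnb
    have := mul_le_mul_of_nonneg_right hnbR hδpos.le
    linarith
  -- per-term log bound
  have hNδ : (N : ℝ) * δ ≤ Real.log ν / 4 := by
    rw [hδ, mul_div_assoc']
    rw [div_le_div_iff₀ (by positivity) (by norm_num : (0:ℝ) < 4)]
    nlinarith [hlog.le]
  -- per-term log bound
  have hlogQ : ∀ t, Real.log (Qfun ψ δ (c t)) ≤ ((cdeg ψ (c t).snd : ℝ) - 2) + Real.log ν / 4 := by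
    intro t
    have h0 : 0 < Qfun ψ δ (c t) := lt_of_lt_of_le one_pos (hQlb t)
    have h1 := Real.log_le_sub_one_of_pos h0
    have h2 := hQub t
    linarith [hNδ]
  have hmaps : ∀ t ∈ Finset.range L, c t ∈ cycD ψ := fun t _ => hccd t
  have hgrp : ∑ t ∈ Finset.range L, ((cdeg ψ (c t).snd : ℝ) - 2)
      = ∑ f ∈ cycD ψ, ((((Finset.range L).filter (fun t => c t = f)).card : ℝ))
          * ((cdeg ψ f.snd : ℝ) - 2) := by
    rw [← Finset.sum_fiberwise_of_maps_to hmaps (fun t => ((cdeg ψ (c t).snd : ℝ) - 2))]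
    apply Finset.sum_congr rfl
    intro f hf
    rw [Finset.sum_congr rfl (fun t ht => by rw [(Finset.mem_filter.mp ht).2]),
      Finset.sum_const, nsmul_eq_mul]
  have hCDne : (cycD ψ).Nonempty := ⟨c 0, hccd 0⟩
  have hsum_cdeg := sum_cdeg_bound hconn hcard hCDne
  have hnnf : ∀ f ∈ cycD ψ, (0:ℝ) ≤ (cdeg ψ f.snd : ℝ) - 2 := by
    intro f hf
    have h2 : (2:ℝ) ≤ (cdeg ψ f.snd : ℝ) := by exact_mod_cast two_le_cdeg_snd hf
    linarith
  have hdegsum : (g:ℝ) * ∑ t ∈ Finset.range L, ((cdeg ψ (c t).snd : ℝ) - 2)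
      ≤ (L:ℝ) * (4*((r:ℝ)+1)^2) := by
    rw [hgrp, Finset.mul_sum]
    have hterm : ∀ f ∈ cycD ψ, (g:ℝ) * ((((Finset.range L).filter (fun t => c t = f)).card : ℝ)
        * ((cdeg ψ f.snd : ℝ) - 2)) ≤ (L:ℝ) * ((cdeg ψ f.snd : ℝ) - 2) := by
      intro f hf
      have hocc := occ_mul_le hpcw hbig f
      have hocc' : ((((Finset.range L).filter (fun t => c t = f)).card : ℝ)) * (g:ℝ) ≤ (L:ℝ) := by
        exact_mod_cast hocc
      nlinarith [hnnf f hf]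
    calc ∑ f ∈ cycD ψ, (g:ℝ) * ((((Finset.range L).filter (fun t => c t = f)).card : ℝ)
            * ((cdeg ψ f.snd : ℝ) - 2))
        ≤ ∑ f ∈ cycD ψ, (L:ℝ) * ((cdeg ψ f.snd:ℝ)-2) := Finset.sum_le_sum hterm
      _ = (L:ℝ) * ∑ f ∈ cycD ψ, ((cdeg ψ f.snd:ℝ)-2) := (Finset.mul_sum _ _ _).symm
      _ ≤ (L:ℝ) * (4*((r:ℝ)+1)^2) := mul_le_mul_of_nonneg_left hsum_cdeg (Nat.cast_nonneg L)
  have h1 : ∑ t ∈ Finset.range L, ((cdeg ψ (c t).snd:ℝ) - 2) ≤ (L:ℝ) * Real.log ν / 4 := by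
    have hgr : (0:ℝ) < g := by exact_mod_cast hgpos
    have hLnn : (0:ℝ) ≤ L := Nat.cast_nonneg L
    nlinarith [hdegsum, mul_le_mul_of_nonneg_left hgν hLnn]
  have hsumlog : ∑ t ∈ Finset.range L, Real.log (Qfun ψ δ (c t)) ≤ (L:ℝ) * Real.log ν / 2 := by
    calc ∑ t ∈ Finset.range L, Real.log (Qfun ψ δ (c t))
        ≤ ∑ t ∈ Finset.range L, (((cdeg ψ (c t).snd:ℝ) - 2) + Real.log ν / 4) :=
          Finset.sum_le_sum (fun t _ => hlogQ t)
      _ = (∑ t ∈ Finset.range L, ((cdeg ψ (c t).snd:ℝ) - 2)) + L * (Real.log ν / 4) := by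
          rw [Finset.sum_add_distrib, Finset.sum_const, Finset.card_range, nsmul_eq_mul]
      _ ≤ (L:ℝ) * Real.log ν / 2 := by linarith [h1]
  have hQfin : ∑ t ∈ Finset.range L, Real.logb ν (Qfun ψ δ (c t)) ≤ (L:ℝ)/2 := by
    simp only [Real.logb]
    rw [← Finset.sum_div, div_le_iff₀ hlog]
    calc ∑ t ∈ Finset.range L, Real.log (Qfun ψ δ (c t)) ≤ (L:ℝ) * Real.log ν / 2 := hsumlog
      _ = (L:ℝ)/2 * Real.log ν := by ring
  have hterm_eq : ∀ t ∈ Finset.range L, (-(bfun ψ ν δ (c t) (c (t+1))))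
      = Real.logb ν (Qfun ψ δ (c t)) - 1/2 := by
    intro t _
    show -(1/2 + Real.logb ν (qfun ψ δ (c (t+1))) - Real.logb ν (Qfun ψ δ (c t))) = _
    rw [hq1 (t+1), Real.logb_one]
    ring
  rw [Finset.sum_congr rfl hterm_eq, Finset.sum_sub_distrib, Finset.sum_const,
    Finset.card_range, nsmul_eq_mul]
  linarith [hQfin]

lemma weight_sum_le (hν : 1 < ν) (hδpos : 0 < δ) {φ : ψ.Dart → ℝ}
    (hφ : ∀ d e, NBStep d e → -(bfun ψ ν δ d e) + φ e ≤ φ d) (d : ψ.Dart) :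
    ∑ e ∈ nbF d, (ν:ℝ) ^ (φ e) ≤ ν ^ ((1:ℝ)/2) * ν ^ (φ d) := by
  have hν0 : (0:ℝ) < ν := lt_trans one_pos hν
  have hν1 : ν ≠ 1 := ne_of_gt hν
  rcases Finset.eq_empty_or_nonempty (nbF d) with hemp | hnonemp
  · rw [hemp, Finset.sum_empty]
    positivity
  · have hQpos : 0 < Qfun ψ δ d := Finset.sum_pos (fun e _ => qfun_pos hδpos e) hnonemp
    have hstep2 : ∀ e ∈ nbF d, (ν:ℝ) ^ (φ e)
        ≤ ν ^ (φ d) * (ν ^ ((1:ℝ)/2) * (qfun ψ δ e / Qfun ψ δ d)) := by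
      intro e he
      have h2 : φ e ≤ φ d + bfun ψ ν δ d e := by
        have := hφ d e (mem_nbF.mp he)
        linarith
      calc (ν:ℝ) ^ (φ e) ≤ ν ^ (φ d + bfun ψ ν δ d e) :=
            Real.rpow_le_rpow_of_exponent_le hν.le h2
        _ = ν ^ (φ d) * (ν ^ ((1:ℝ)/2) * (qfun ψ δ e / Qfun ψ δ d)) := by
            rw [Real.rpow_add hν0]
            congr 1
            show (ν:ℝ) ^ ((1:ℝ)/2 + Real.logb ν (qfun ψ δ e) - Real.logb ν (Qfun ψ δ d)) = _
            rw [sub_eq_add_neg, Real.rpow_add hν0, Real.rpow_add hν0, Real.rpow_neg hν0.le,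
              Real.rpow_logb hν0 hν1 (qfun_pos hδpos e), Real.rpow_logb hν0 hν1 hQpos,
              div_eq_mul_inv]
            ring
    calc ∑ e ∈ nbF d, (ν:ℝ) ^ (φ e)
        ≤ ∑ e ∈ nbF d, ν ^ (φ d) * (ν ^ ((1:ℝ)/2) * (qfun ψ δ e / Qfun ψ δ d)) :=
          Finset.sum_le_sum hstep2
      _ = ν ^ (φ d) * (ν ^ ((1:ℝ)/2) * ((∑ e ∈ nbF d, qfun ψ δ e) / Qfun ψ δ d)) := by
          rw [← Finset.mul_sum, ← Finset.mul_sum, ← Finset.sum_div]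
      _ = ν ^ ((1:ℝ)/2) * ν ^ (φ d) := by
          rw [show (∑ e ∈ nbF d, qfun ψ δ e) = Qfun ψ δ d from rfl, div_self hQpos.ne']
          ring

end Weights

end TangleProof

/-- For every `r ∈ ℕ` and every real `ν > 1` there is a `g ∈ ℕ` such that every finite
connected simple graph of order `< r` (i.e. `#E < #V + r`) whose Hashimoto matrix has
an eigenvalue of absolute value at least `ν` has girth at most `g`. -/
theorem tangles_have_bounded_girth (r : ℕ) (ν : ℝ) (hν : 1 < ν) :
    ∃ g : ℕ, ∀ (W : Type) (_ : Fintype W) (_ : DecidableEq W)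
      (ψ : SimpleGraph W) (_ : DecidableRel ψ.Adj),
      ψ.Connected →
      ψ.edgeFinset.card < Fintype.card W + r →
      (∃ lam : ℂ, ν ≤ ‖lam‖ ∧
        ∃ x : ψ.Dart → ℂ, x ≠ 0 ∧ (hashimotoMatrix ψ).mulVec x = lam • x) →
      ψ.egirth ≤ (g : ℕ∞) := by
  classical
  refine ⟨⌈16 * ((r:ℝ)+1)^2 / Real.log ν⌉₊ + 1, ?_⟩
  intro W iW dW ψ dA hconn hcard hex
  obtain ⟨lam, hlam, x, hx0, heig⟩ := hex
  set g : ℕ := ⌈16 * ((r:ℝ)+1)^2 / Real.log ν⌉₊ + 1 with hgdef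
  by_contra hgle
  have hlog : 0 < Real.log ν := Real.log_pos hν
  have hbig : ∀ (c : ℕ → ψ.Dart) (L : ℕ), TangleProof.IsPCW c L → g < L := by
    intro c L hpcw
    by_contra hL
    push_neg at hL
    have h1 := TangleProof.egirth_le_of_PCW L c hpcw
    exact hgle (le_trans h1 (Nat.cast_le.mpr hL))
  have hgν : 16 * ((r:ℝ)+1)^2 ≤ (g:ℝ) * Real.log ν := by
    have h1 : 16 * ((r:ℝ)+1)^2 / Real.log ν ≤ (g:ℝ) := by
      refine le_trans (Nat.le_ceil _) ?_
      rw [hgdef]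
      push_cast
      linarith
    calc 16*((r:ℝ)+1)^2 = (16*((r:ℝ)+1)^2 / Real.log ν) * Real.log ν := by
          field_simp
      _ ≤ (g:ℝ) * Real.log ν := mul_le_mul_of_nonneg_right h1 hlog.le
  set δ : ℝ := Real.log ν / (4 * (Fintype.card ψ.Dart + 1)) with hδdef
  have hδpos : 0 < δ := by rw [hδdef]; positivity
  have Hcyc := TangleProof.cyclesum_nonpos hν hconn hcard hδdef hgν hbig
  obtain ⟨φ, hφ⟩ :=
    TangleProof.bellman_potential (fun d e => -(TangleProof.bfun ψ ν δ d e)) Hcyc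
  have hwsum := TangleProof.weight_sum_le hν hδpos hφ
  have hν0 : (0:ℝ) < ν := lt_trans one_pos hν
  have hwpos : ∀ d : ψ.Dart, (0:ℝ) < ν ^ (φ d) := fun d => Real.rpow_pos_of_pos hν0 _
  have hlamle :=
    TangleProof.eigen_bound (ν ^ ((1:ℝ)/2)) (fun d => ν ^ (φ d)) hwpos hwsum hx0 heig
  have hlt : ν ^ ((1:ℝ)/2) < ν := by
    calc ν ^ ((1:ℝ)/2) < ν ^ (1:ℝ) := Real.rpow_lt_rpow_of_exponent_lt hν (by norm_num)
      _ = ν := Real.rpow_one ν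
  linarith [hlam, hlamle, hlt]
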